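/- Let n ≥ 1, let F be an n×n real matrix, and let P be an n×n real symmetric positive definite matrix satisfying Fᵀ·P·F − P = −I_n. Let λ_max(P) denote the largest eigenvalue of P, set λ = 1 − 1/(2·λ_max(P)) and β = ‖P‖ + 2·‖P·F‖², where ‖·‖ is the operator norm induced by the Euclidean norm on ℝⁿ. Then for all vectors x, g ∈ ℝⁿ, (F·x + g)ᵀ·P·(F·x + g) ≤ λ·(xᵀ·P·x) + β·‖g‖². -/

import Mathlib

open Matrix Pointwise

lemma lyap_aux_rayleigh (n : ℕ) (P : Matrix (Fin n) (Fin n) ℝ) (hPherm : P.IsHermitian)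
    (lamMax : ℝ) (hlamMax : IsGreatest (spectrum ℝ P) lamMax) :
    ∀ y : EuclideanSpace ℝ (Fin n),
      (inner ℝ y (Matrix.toEuclideanCLM (𝕜 := ℝ) P y) : ℝ) ≤ lamMax * ‖y‖ ^ 2 := by
  intro y
  set Q : Matrix (Fin n) (Fin n) ℝ := algebraMap ℝ _ lamMax - P with hQ
  have hQherm : Q.IsHermitian := by
    apply Matrix.IsHermitian.sub _ hPherm
    simp [Matrix.IsHermitian, Matrix.algebraMap_eq_diagonal, Matrix.diagonal_conjTranspose]
  have hQpsd : Q.PosSemidef := by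
    rw [hQherm.posSemidef_iff_eigenvalues_nonneg]
    intro i
    have hmem : hQherm.eigenvalues i ∈ spectrum ℝ Q :=
      hQherm.eigenvalues_mem_spectrum_real i
    have hmem2 : hQherm.eigenvalues i ∈ ({lamMax} : Set ℝ) - spectrum ℝ P := by
      rw [spectrum.singleton_sub_eq]; exact hmem
    obtain ⟨a, ha, b, hb, hab⟩ := hmem2
    simp only [Set.mem_singleton_iff] at ha
    have hble := hlamMax.2 hb
    have heq : lamMax - b = hQherm.eigenvalues i := by simpa [ha] using hab
    exact (by linarith : (0:ℝ) ≤ hQherm.eigenvalues i)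
  have h0 : 0 ≤ (inner ℝ y (Matrix.toEuclideanCLM (𝕜 := ℝ) Q y) : ℝ) := by
    rw [inner_toEuclideanCLM]
    simpa [dotProduct_comm] using hQpsd.re_dotProduct_nonneg (WithLp.ofLp y)
  rw [show Matrix.toEuclideanCLM (𝕜 := ℝ) Q
      = algebraMap ℝ _ lamMax - Matrix.toEuclideanCLM (𝕜 := ℝ) P by
      rw [hQ, _root_.map_sub, AlgHomClass.commutes]] at h0
  rw [ContinuousLinearMap.sub_apply, inner_sub_right] at h0
  have : (inner ℝ y ((algebraMap ℝ (EuclideanSpace ℝ (Fin n) →L[ℝ] EuclideanSpace ℝ (Fin n))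
      lamMax) y) : ℝ) = lamMax * ‖y‖ ^ 2 := by
    rw [Algebra.algebraMap_eq_smul_one, ContinuousLinearMap.smul_apply,
      ContinuousLinearMap.one_apply, real_inner_smul_right, real_inner_self_eq_norm_sq]
  linarith [h0, this]

theorem lyapunov_one_step
    (n : ℕ) (hn : 1 ≤ n)
    (F P : Matrix (Fin n) (Fin n) ℝ)
    (hPsymm : P.IsSymm) (hPpd : P.PosDef)
    (hLyap : Fᵀ * P * F - P = -(1 : Matrix (Fin n) (Fin n) ℝ))
    (lamMax lam beta : ℝ)
    (hlamMax : IsGreatest (spectrum ℝ P) lamMax)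
    (hlam : lam = 1 - 1 / (2 * lamMax))
    (hbeta : beta = ‖Matrix.toEuclideanCLM (𝕜 := ℝ) P‖ +
      2 * ‖Matrix.toEuclideanCLM (𝕜 := ℝ) (P * F)‖ ^ 2) :
    ∀ x g : EuclideanSpace ℝ (Fin n),
      (inner ℝ (Matrix.toEuclideanCLM (𝕜 := ℝ) F x + g)
          (Matrix.toEuclideanCLM (𝕜 := ℝ) P (Matrix.toEuclideanCLM (𝕜 := ℝ) F x + g)) : ℝ) ≤
        lam * (inner ℝ x (Matrix.toEuclideanCLM (𝕜 := ℝ) P x) : ℝ) + beta * ‖g‖ ^ 2 := by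
  intro x g
  set A := Matrix.toEuclideanCLM (𝕜 := ℝ) P with hA
  set Bf := Matrix.toEuclideanCLM (𝕜 := ℝ) F with hBf
  set C := Matrix.toEuclideanCLM (𝕜 := ℝ) (P * F) with hC
  clear_value A Bf C
  have hPstar : star P = P := by
    rw [Matrix.star_eq_conjTranspose, Matrix.conjTranspose_eq_transpose_of_trivial]
    exact hPsymm
  have hray : ∀ y : EuclideanSpace ℝ (Fin n),
      (inner ℝ y (A y) : ℝ) ≤ lamMax * ‖y‖ ^ 2 := by
    rw [hA]; exact lyap_aux_rayleigh n P hPpd.1 lamMax hlamMax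
  -- positivity of lamMax
  have hinner_pos : ∀ y : EuclideanSpace ℝ (Fin n), y ≠ 0 →
      0 < (inner ℝ y (A y) : ℝ) := by
    intro y hy
    rw [hA, inner_toEuclideanCLM]
    simpa [dotProduct_comm] using hPpd.re_dotProduct_pos (x := WithLp.ofLp y) (by simpa using hy)
  have hLpos : 0 < lamMax := by
    set e : EuclideanSpace ℝ (Fin n) := EuclideanSpace.single ⟨0, hn⟩ (1 : ℝ) with he
    have hene : e ≠ 0 := by
      intro h
      have : (1 : ℝ) = 0 := by
        have := congrFun (congrArg (WithLp.equiv 2 _) h) ⟨0, hn⟩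
        simpa [he] using this
      norm_num at this
    have h1 := hinner_pos e hene
    have h2 := hray e
    have h3 : ‖e‖ = 1 := by simp [he]
    rw [h3] at h2
    nlinarith
  -- self-adjointness of A
  have hAsa : star A = A := by rw [hA, ← map_star, hPstar]
  have hadjA : ContinuousLinearMap.adjoint A = A := by
    rw [← ContinuousLinearMap.star_eq_adjoint, hAsa]
  -- C = A * Bf
  have hCAB : C = A * Bf := by rw [hC, _root_.map_mul, ← hA, ← hBf]
  -- adjoint of Bf
  have hadjBf : ContinuousLinearMap.adjoint Bf = Matrix.toEuclideanCLM (𝕜 := ℝ) Fᵀ := by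
    rw [← ContinuousLinearMap.star_eq_adjoint, hBf, ← map_star, Matrix.star_eq_conjTranspose,
      Matrix.conjTranspose_eq_transpose_of_trivial]
  -- T1
  have hT1 : (inner ℝ (Bf x) (A (Bf x)) : ℝ) = (inner ℝ x (A x) : ℝ) - ‖x‖ ^ 2 := by
    have h1 : (inner ℝ (Bf x) (A (Bf x)) : ℝ)
        = (inner ℝ x ((ContinuousLinearMap.adjoint Bf) (A (Bf x))) : ℝ) :=
      (ContinuousLinearMap.adjoint_inner_right Bf x (A (Bf x))).symm
    have h2 : (ContinuousLinearMap.adjoint Bf) (A (Bf x))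
        = Matrix.toEuclideanCLM (𝕜 := ℝ) (Fᵀ * P * F) x := by
      rw [hadjBf, hA, hBf,
        show Matrix.toEuclideanCLM (𝕜 := ℝ) (Fᵀ * P * F)
            = Matrix.toEuclideanCLM (𝕜 := ℝ) Fᵀ * Matrix.toEuclideanCLM (𝕜 := ℝ) P *
              Matrix.toEuclideanCLM (𝕜 := ℝ) F from by
          rw [_root_.map_mul, _root_.map_mul]]
      rfl
    have h3 : Fᵀ * P * F = P - 1 := by
      linear_combination (norm := abel) hLyap
    rw [h1, h2, h3, _root_.map_sub, _root_.map_one, ContinuousLinearMap.sub_apply,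
      ContinuousLinearMap.one_apply, inner_sub_right, real_inner_self_eq_norm_sq, ← hA]
  -- cross term
  have hcross : (inner ℝ (Bf x) (A g) : ℝ) = (inner ℝ g (C x) : ℝ) := by
    rw [← ContinuousLinearMap.adjoint_inner_left A, hadjA, hCAB,
      ContinuousLinearMap.mul_apply]
    exact real_inner_comm _ _
  have hcross2 : (inner ℝ g (A (Bf x)) : ℝ) = (inner ℝ g (C x) : ℝ) := by
    rw [hCAB, ContinuousLinearMap.mul_apply]
  -- expand LHS
  have hexp : (inner ℝ (Bf x + g) (A (Bf x + g)) : ℝ)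
      = ((inner ℝ x (A x) : ℝ) - ‖x‖ ^ 2) + 2 * (inner ℝ g (C x) : ℝ) + (inner ℝ g (A g) : ℝ) := by
    rw [map_add, inner_add_left, inner_add_right, inner_add_right, hT1, hcross, hcross2]
    ring
  -- bounds
  have hb1 : (inner ℝ g (C x) : ℝ) ≤ ‖C‖ * ‖x‖ * ‖g‖ := by
    calc (inner ℝ g (C x) : ℝ) ≤ ‖g‖ * ‖C x‖ := real_inner_le_norm g (C x)
      _ ≤ ‖g‖ * (‖C‖ * ‖x‖) := mul_le_mul_of_nonneg_left (C.le_opNorm x) (norm_nonneg g)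
      _ = ‖C‖ * ‖x‖ * ‖g‖ := by ring
  have hb2 : (inner ℝ g (A g) : ℝ) ≤ ‖A‖ * ‖g‖ ^ 2 := by
    calc (inner ℝ g (A g) : ℝ) ≤ ‖g‖ * ‖A g‖ := real_inner_le_norm g (A g)
      _ ≤ ‖g‖ * (‖A‖ * ‖g‖) := mul_le_mul_of_nonneg_left (A.le_opNorm g) (norm_nonneg g)
      _ = ‖A‖ * ‖g‖ ^ 2 := by ring
  have hrx := hray x
  have hdiv : 1 / (2 * lamMax) * (inner ℝ x (A x) : ℝ) ≤ ‖x‖ ^ 2 / 2 := by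
    rw [div_mul_eq_mul_div, one_mul, div_le_div_iff₀ (by positivity) (by norm_num)]
    linarith
  have hsq : 0 ≤ ‖x‖ ^ 2 - 4 * ‖C‖ * ‖x‖ * ‖g‖ + 4 * ‖C‖ ^ 2 * ‖g‖ ^ 2 := by
    nlinarith [sq_nonneg (‖x‖ - 2 * ‖C‖ * ‖g‖)]
  have final : ∀ v t u X G c a L : ℝ, t ≤ c * X * G → u ≤ a * G ^ 2 →
      1 / (2 * L) * v ≤ X ^ 2 / 2 → 0 ≤ X ^ 2 - 4 * c * X * G + 4 * c ^ 2 * G ^ 2 →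
      (v - X ^ 2) + 2 * t + u ≤ (1 - 1 / (2 * L)) * v + (a + 2 * c ^ 2) * G ^ 2 := by
    intro v t u X G c a L h1 h2 h3 h4
    linarith
  rw [hexp, hlam, hbeta]
  exact final _ _ _ _ _ _ _ _ hb1 hb2 hdiv hsq
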